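/- Let τ = {(0,0)} ∪ {(t, t·sin(1/t)) : 0 < t ≤ 1} ⊆ ℝ² and let g : τ → ℝ be g(x, y) = y. Let h : [0,1] → τ be any homeomorphism from [0,1] (identified with [0,1] × {0}) onto τ. Then the function f = g ∘ h : [0,1] → ℝ has unbounded classical total variation on [0,1]. -/

import Mathlib

open scoped ENNReal
open Set Filter

private lemma auxF_cont : Continuous (fun s : ℝ => s * Real.sin (1 / s)) := by
  rw [continuous_iff_continuousAt]
  intro x
  rcases eq_or_ne x 0 with rfl | hx
  · have h0 : Tendsto (fun s : ℝ => s * Real.sin (1 / s)) (nhds 0) (nhds 0) := by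
      apply squeeze_zero_norm (a := fun s : ℝ => |s|)
      · intro s
        rw [Real.norm_eq_abs, abs_mul]
        calc |s| * |Real.sin (1 / s)| ≤ |s| * 1 := by
              exact mul_le_mul_of_nonneg_left (Real.abs_sin_le_one _) (abs_nonneg _)
          _ = |s| := mul_one _
      · simpa using (continuous_abs.tendsto (0 : ℝ))
    simpa [ContinuousAt] using h0
  · exact continuousAt_id.mul (Real.continuous_sin.continuousAt.comp
      (continuousAt_const.div continuousAt_id hx))

private lemma aux_sin (k : ℕ) : Real.sin ((k : ℝ) * Real.pi + Real.pi / 2) = (-1) ^ k := by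
  rw [Real.sin_add, Real.sin_nat_mul_pi, Real.sin_pi_div_two, Real.cos_pi_div_two]
  have := Real.cos_nat_mul_pi_sub 0 k
  simp at this
  simp [this]

/-- Let `τ = {(0,0)} ∪ {(t, t sin(1/t)) : 0 < t ≤ 1}`, `g(x,y) = y`, and let
`h : [0,1] ≃ₜ τ` be any homeomorphism. Then `f = g ∘ h` has unbounded (infinite)
classical total variation on `[0,1]`. -/
theorem composition_with_homeomorphism_unbounded_variation
    (τ : Set (ℝ × ℝ))
    (hτ : τ = {((0 : ℝ), (0 : ℝ))} ∪
      {p : ℝ × ℝ | ∃ t : ℝ, 0 < t ∧ t ≤ 1 ∧ p = (t, t * Real.sin (1 / t))})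
    (h : (Set.Icc (0 : ℝ) 1) ≃ₜ τ) :
    eVariationOn (fun t : Set.Icc (0 : ℝ) 1 => ((h t : ℝ × ℝ)).2) Set.univ = ⊤ := by
  have hπ : (0 : ℝ) < Real.pi := Real.pi_pos
  -- the sequence of parameters
  set t : ℕ → ℝ := fun k => 2 / ((2 * k + 1) * Real.pi) with ht
  have htpos : ∀ k, 0 < t k := by
    intro k
    apply div_pos two_pos
    positivity
  have htle : ∀ k, t k ≤ 1 := by
    intro k
    rw [ht, div_le_one (by positivity)]
    calc (2 : ℝ) ≤ Real.pi := by linarith [Real.pi_gt_three]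
      _ = 1 * Real.pi := (one_mul _).symm
      _ ≤ (2 * k + 1) * Real.pi := by
          apply mul_le_mul_of_nonneg_right _ hπ.le
          have : (0:ℝ) ≤ (k:ℝ) := Nat.cast_nonneg k
          linarith
  have htanti : StrictAnti t := by
    intro a b hab
    rw [ht]
    apply div_lt_div_of_pos_left two_pos (by positivity)
    have : (a : ℝ) < b := by exact_mod_cast hab
    nlinarith
  have hsin : ∀ k, Real.sin (1 / t k) = (-1) ^ k := by
    intro k
    have : 1 / t k = (k : ℝ) * Real.pi + Real.pi / 2 := by
      rw [ht, one_div_div]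
      ring
    rw [this, aux_sin]
  -- points on the curve
  set x : ℕ → ℝ × ℝ := fun k => (t k, t k * Real.sin (1 / t k)) with hx
  have hxτ : ∀ k, x k ∈ τ := by
    intro k
    rw [hτ]
    exact Or.inr ⟨t k, htpos k, htle k, rfl⟩
  -- the parametrization φ of τ
  set φ : Set.Icc (0 : ℝ) 1 → ℝ × ℝ := fun s => ((s : ℝ), (s : ℝ) * Real.sin (1 / (s : ℝ))) with hφ
  have hφτ : ∀ s, φ s ∈ τ := by
    rintro ⟨s, hs0, hs1⟩
    rw [hτ]
    rcases eq_or_lt_of_le hs0 with heq | hlt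
    · left
      simp [hφ, ← heq]
    · exact Or.inr ⟨s, hlt, hs1, rfl⟩
  set φ' : Set.Icc (0 : ℝ) 1 → τ := fun s => ⟨φ s, hφτ s⟩ with hφ'
  have hφc : Continuous φ' := by
    apply Continuous.subtype_mk
    exact (continuous_subtype_val).prodMk (auxF_cont.comp continuous_subtype_val)
  have hφbij : Function.Bijective φ' := by
    constructor
    · intro a b hab
      apply Subtype.ext
      have h1 : φ a = φ b := congrArg Subtype.val hab
      have h2 := congrArg Prod.fst h1
      simpa [hφ] using h2
    · rintro ⟨p, hp⟩
      rw [hτ] at hp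
      rcases hp with hp | ⟨s, hs0, hs1, rfl⟩
      · refine ⟨⟨0, le_refl _, zero_le_one⟩, ?_⟩
        apply Subtype.ext
        simp only [Set.mem_singleton_iff] at hp
        simp [hφ', hφ, hp]
      · exact ⟨⟨s, hs0.le, hs1⟩, rfl⟩
  set e : Set.Icc (0 : ℝ) 1 ≃ τ := Equiv.ofBijective φ' hφbij with he
  have hec : Continuous e := hφc
  set Φ : Set.Icc (0 : ℝ) 1 ≃ₜ τ := Continuous.homeoOfEquivCompactToT2 (f := e) hec with hΦ
  -- the self-homeomorphism ψ of the interval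
  set ψ : Set.Icc (0 : ℝ) 1 ≃ₜ Set.Icc (0 : ℝ) 1 := Φ.trans h.symm with hψ
  -- the sequence z in [0,1]
  have htmem : ∀ k, t k ∈ Set.Icc (0 : ℝ) 1 := fun k => ⟨(htpos k).le, htle k⟩
  set z : ℕ → Set.Icc (0 : ℝ) 1 := fun k => ψ ⟨t k, htmem k⟩ with hz
  -- evaluate f on z
  set f : Set.Icc (0 : ℝ) 1 → ℝ := fun s => ((h s : ℝ × ℝ)).2 with hf
  have hΦval : ∀ s, (Φ s : ℝ × ℝ) = φ s := fun s => rfl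
  have hhz : ∀ k, (h (z k) : ℝ × ℝ) = x k := by
    intro k
    rw [hz]
    simp only [hψ, Homeomorph.trans_apply, Homeomorph.apply_symm_apply]
    rfl
  have hfz : ∀ k, f (z k) = (-1) ^ k * t k := by
    intro k
    rw [hf]
    simp only [hhz k, hx]
    rw [hsin k]; ring
  -- monotonicity of z
  have hG : StrictMono (fun s : Set.Icc (0:ℝ) 1 => (ψ s : ℝ)) ∨
      StrictAnti (fun s : Set.Icc (0:ℝ) 1 => (ψ s : ℝ)) := by
    set G : ℝ → ℝ := fun s => if hs : s ∈ Set.Icc (0:ℝ) 1 then (ψ ⟨s, hs⟩ : ℝ) else s with hGdef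
    have hGeq : ∀ s : Set.Icc (0:ℝ) 1, G (s : ℝ) = (ψ s : ℝ) := by
      intro s
      rw [hGdef]
      simp only [dif_pos s.2, Subtype.coe_eta]
    have hGc : ContinuousOn G (Set.Icc (0:ℝ) 1) := by
      rw [continuousOn_iff_continuous_restrict]
      have hre : Set.restrict (Set.Icc (0:ℝ) 1) G = fun s : Set.Icc (0:ℝ) 1 => (ψ s : ℝ) := by
        funext s; exact hGeq s
      rw [show (Set.Icc (0:ℝ) 1).domRestrict G = _ from hre]
      exact continuous_subtype_val.comp ψ.continuous
    have hGi : Set.InjOn G (Set.Icc (0:ℝ) 1) := by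
      intro a ha b hb hab
      have hab' : (ψ ⟨a, ha⟩ : ℝ) = (ψ ⟨b, hb⟩ : ℝ) := by
        rw [← hGeq ⟨a, ha⟩, ← hGeq ⟨b, hb⟩]; exact hab
      have h2 := ψ.injective (Subtype.ext hab')
      exact congrArg Subtype.val h2
    rcases ContinuousOn.strictMonoOn_of_injOn_Icc' zero_le_one hGc hGi with hm | hm
    · left; intro a b hab
      have h3 := hm a.2 b.2 (Subtype.coe_lt_coe.mpr hab)
      rw [hGeq a, hGeq b] at h3
      exact h3
    · right; intro a b hab
      have h3 := hm a.2 b.2 (Subtype.coe_lt_coe.mpr hab)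
      rw [hGeq a, hGeq b] at h3
      exact h3
  -- z is strictly monotone in some direction
  have hzmono : StrictMono z ∨ StrictAnti z := by
    rcases hG with hG | hG
    · right
      intro a b hab
      have : (ψ ⟨t b, htmem b⟩ : ℝ) < (ψ ⟨t a, htmem a⟩ : ℝ) := by
        apply hG
        exact Subtype.mk_lt_mk.mpr (htanti hab)
      exact Subtype.coe_lt_coe.mp this
    · left
      intro a b hab
      have : (ψ ⟨t a, htmem a⟩ : ℝ) < (ψ ⟨t b, htmem b⟩ : ℝ) := by
        apply hG
        exact Subtype.mk_lt_mk.mpr (htanti hab)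
      exact Subtype.coe_lt_coe.mp this
  -- key sum bound
  have hterm : ∀ k, edist (f (z (k + 1))) (f (z k)) = ENNReal.ofReal (t (k+1) + t k) := by
    intro k
    rw [edist_dist, Real.dist_eq, hfz, hfz]
    congr 1
    have : (-1 : ℝ) ^ (k+1) * t (k+1) - (-1) ^ k * t k = (-1)^(k+1) * (t (k+1) + t k) := by
      ring
    rw [this, abs_mul, abs_pow, abs_neg, abs_one, one_pow, one_mul,
      abs_of_pos (by positivity)]
  have key : ∀ n : ℕ, ∑ i ∈ Finset.range n, edist (f (z (i+1))) (f (z i)) ≤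
      eVariationOn f Set.univ := by
    intro n
    rcases hzmono with hzm | hza
    · exact eVariationOn.sum_le (f := f) (n := n) hzm.monotone (fun i => Set.mem_univ _)
    · have hu : Monotone (fun i => z (n - i)) :=
        hza.antitone.comp (fun a b hab => Nat.sub_le_sub_left hab n)
      have hsum := eVariationOn.sum_le (f := f) (n := n) hu (fun i => Set.mem_univ _)
      refine le_trans (le_of_eq ?_) hsum
      rw [← Finset.sum_range_reflect]
      apply Finset.sum_congr rfl
      intro i hi
      rw [Finset.mem_range] at hi
      have h1 : n - 1 - i + 1 = n - i := by omega
      have h2 : n - 1 - i = n - (i + 1) := by omega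
      rw [h1, h2, edist_comm]
  -- conclude
  by_contra hne
  have hlb : ∀ n : ℕ, ∑ i ∈ Finset.range n, (1 / (Real.pi * (i + 1)) : ℝ) ≤
      (eVariationOn f Set.univ).toReal := by
    intro n
    have h1 : ENNReal.ofReal (∑ i ∈ Finset.range n, (1 / (Real.pi * (i + 1)) : ℝ)) ≤
        eVariationOn f Set.univ := by
      rw [ENNReal.ofReal_sum_of_nonneg (fun i _ => by positivity)]
      refine le_trans (Finset.sum_le_sum ?_) (key n)
      intro i _
      rw [hterm i]
      apply ENNReal.ofReal_le_ofReal
      have h2 : 1 / (Real.pi * (i + 1)) ≤ t i := by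
        rw [ht, div_le_div_iff₀ (by positivity) (by positivity)]
        have : (0:ℝ) ≤ Real.pi := hπ.le
        nlinarith [htpos i]
      linarith [htpos (i+1)]
    exact (ENNReal.ofReal_le_iff_le_toReal hne).mp h1
  have hdiv : Tendsto (fun n => ∑ i ∈ Finset.range n, (1 / (Real.pi * (i + 1)) : ℝ))
      atTop atTop := by
    have heq : ∀ n, ∑ i ∈ Finset.range n, (1 / (Real.pi * (i + 1)) : ℝ) =
        (1 / Real.pi) * ∑ i ∈ Finset.range n, (1 / (i + 1) : ℝ) := by
      intro n
      rw [Finset.mul_sum]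
      apply Finset.sum_congr rfl
      intro i _
      rw [div_mul_div_comm, one_mul, mul_comm]
    simp only [heq]
    exact Real.tendsto_sum_range_one_div_nat_succ_atTop.const_mul_atTop (by positivity)
  obtain ⟨n, hn⟩ := (hdiv.eventually_gt_atTop ((eVariationOn f Set.univ).toReal)).exists
  exact absurd (hlb n) (not_le.mpr hn)
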